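/- Let B = (b_{ij}) be an n×n integer skew-symmetric matrix with all entries in {−1, 0, 1}, n ≥ 4, and assume the underlying graph of B contains no 4-cycles, i.e., there are no four distinct indices i, j, k, l with b_{ij}, b_{jk}, b_{kl}, b_{li} all nonzero. Then the sum, over all 4-element subsets S ⊆ {1,…,n}, of the determinant of the principal submatrix of B indexed by S, equals the number of unordered pairs {{i,j},{k,l}} of edges of the underlying graph with {i,j} ∩ {k,l} = ∅ (pairs of disadjacent arrows of Q(B)). -/

import Mathlib

set_option maxHeartbeats 1000000

lemma det4 (a b c d e f : ℤ) :
    (Matrix.of ![![0,a,b,c], ![-a,0,d,e], ![-b,-d,0,f], ![-c,-e,-f,0]]).det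
      = (a*f - b*e + c*d)^2 := by
  simp [Matrix.det_succ_row_zero, Fin.sum_univ_succ, Matrix.det_fin_three, Fin.succAbove,
    show (Fin.castSucc 2 : Fin 4) = 2 by decide]
  ring

lemma sqind (a f : ℤ) (ha : a = -1 ∨ a = 0 ∨ a = 1) (hf : f = -1 ∨ f = 0 ∨ f = 1) :
    (a*f)^2 = if a ≠ 0 ∧ f ≠ 0 then 1 else 0 := by
  rcases ha with rfl|rfl|rfl <;> rcases hf with rfl|rfl|rfl <;> norm_num

lemma mulval (a f : ℤ) (ha : a = -1 ∨ a = 0 ∨ a = 1) (hf : f = -1 ∨ f = 0 ∨ f = 1) :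
    a*f = -1 ∨ a*f = 0 ∨ a*f = 1 := by
  rcases ha with rfl|rfl|rfl <;> rcases hf with rfl|rfl|rfl <;> norm_num

lemma sumsq (p q r : ℤ) (hp : p = -1 ∨ p = 0 ∨ p = 1) (hq : q = -1 ∨ q = 0 ∨ q = 1)
    (hr : r = -1 ∨ r = 0 ∨ r = 1) (hpq : p = 0 ∨ q = 0) (hpr : p = 0 ∨ r = 0)
    (hqr : q = 0 ∨ r = 0) : (p - q + r)^2 = p^2 + q^2 + r^2 := by
  rcases hp with rfl|rfl|rfl <;> rcases hq with rfl|rfl|rfl <;> rcases hr with rfl|rfl|rfl <;> omega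

lemma pigeon {n : ℕ} (v0 v1 v2 v3 q11 q12 q21 q22 : Fin n)
    (h01 : v0 < v1) (h02 : v0 < v2) (h03 : v0 < v3) (h12 : v1 < v2)
    (h13 : v1 < v3) (h23 : v2 < v3)
    (h1 : q11 < q12) (h2 : q21 < q22) (h3 : q11 < q21)
    (d1 : q11 ≠ q21) (d2 : q11 ≠ q22) (d3 : q12 ≠ q21) (d4 : q12 ≠ q22)
    (e1 : q11 = v0 ∨ q11 = v1 ∨ q11 = v2 ∨ q11 = v3)
    (e2 : q12 = v0 ∨ q12 = v1 ∨ q12 = v2 ∨ q12 = v3)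
    (e3 : q21 = v0 ∨ q21 = v1 ∨ q21 = v2 ∨ q21 = v3)
    (e4 : q22 = v0 ∨ q22 = v1 ∨ q22 = v2 ∨ q22 = v3) :
    ((q11 = v0 ∧ q12 = v1) ∧ (q21 = v2 ∧ q22 = v3)) ∨
    ((q11 = v0 ∧ q12 = v2) ∧ (q21 = v1 ∧ q22 = v3)) ∨
    ((q11 = v0 ∧ q12 = v3) ∧ (q21 = v1 ∧ q22 = v2)) := by
  rcases e1 with rfl|rfl|rfl|rfl <;> rcases e2 with rfl|rfl|rfl|rfl <;>
    rcases e3 with rfl|rfl|rfl|rfl <;> rcases e4 with rfl|rfl|rfl|rfl <;> omega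

theorem stmt16 {n : ℕ} (hn : 4 ≤ n) (B : Matrix (Fin n) (Fin n) ℤ)
    (hskew : ∀ i j, B j i = -B i j)
    (hval : ∀ i j, B i j = -1 ∨ B i j = 0 ∨ B i j = 1)
    (hno4cycle : ¬ ∃ i j k l : Fin n,
      i ≠ j ∧ i ≠ k ∧ i ≠ l ∧ j ≠ k ∧ j ≠ l ∧ k ≠ l ∧
      B i j ≠ 0 ∧ B j k ≠ 0 ∧ B k l ≠ 0 ∧ B l i ≠ 0) :
    (∑ S ∈ (Finset.univ : Finset (Fin n)).powersetCard 4,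
        Matrix.det (B.submatrix (fun i : S => (i : Fin n)) (fun j : S => (j : Fin n)))) =
      ((Finset.univ.filter
        (fun q : (Fin n × Fin n) × (Fin n × Fin n) =>
          q.1.1 < q.1.2 ∧ q.2.1 < q.2.2 ∧ q.1.1 < q.2.1 ∧
          B q.1.1 q.1.2 ≠ 0 ∧ B q.2.1 q.2.2 ≠ 0 ∧
          q.1.1 ≠ q.2.1 ∧ q.1.1 ≠ q.2.2 ∧ q.1.2 ≠ q.2.1 ∧ q.1.2 ≠ q.2.2)).card : ℤ) := by
  classical
  have hzero : ∀ i, B i i = 0 := fun i => by have := hskew i i; omega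
  set F := Finset.univ.filter
        (fun q : (Fin n × Fin n) × (Fin n × Fin n) =>
          q.1.1 < q.1.2 ∧ q.2.1 < q.2.2 ∧ q.1.1 < q.2.1 ∧
          B q.1.1 q.1.2 ≠ 0 ∧ B q.2.1 q.2.2 ≠ 0 ∧
          q.1.1 ≠ q.2.1 ∧ q.1.1 ≠ q.2.2 ∧ q.1.2 ≠ q.2.1 ∧ q.1.2 ≠ q.2.2) with hF
  have hmap : ∀ q ∈ F, (fun q : (Fin n × Fin n) × (Fin n × Fin n) =>
      ({q.1.1, q.1.2, q.2.1, q.2.2} : Finset (Fin n))) q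
      ∈ (Finset.univ : Finset (Fin n)).powersetCard 4 := by
    intro q hq
    simp only [hF, Finset.mem_filter] at hq
    obtain ⟨-, h1, h2, h3, -, -, d1, d2, d3, d4⟩ := hq
    rw [Finset.mem_powersetCard]
    refine ⟨Finset.subset_univ _, ?_⟩
    rw [Finset.card_insert_of_notMem (by simp only [Finset.mem_insert, Finset.mem_singleton]; omega),
      Finset.card_insert_of_notMem (by simp only [Finset.mem_insert, Finset.mem_singleton]; omega),
      Finset.card_insert_of_notMem (by simp only [Finset.mem_singleton]; omega),
      Finset.card_singleton]
  rw [Finset.card_eq_sum_card_fiberwise hmap]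
  push_cast
  refine Finset.sum_congr rfl ?_
  intro S hS
  have hS4 : S.card = 4 := (Finset.mem_powersetCard.mp hS).2
  set g := S.orderIsoOfFin hS4 with hg
  set v : Fin 4 → Fin n := fun i => (g i : Fin n) with hvdef
  have hvlt : ∀ i j : Fin 4, i < j → v i < v j := by
    intro i j hij
    exact_mod_cast g.lt_iff_lt.mpr hij
  have h01 : v 0 < v 1 := hvlt 0 1 (by decide)
  have h02 : v 0 < v 2 := hvlt 0 2 (by decide)
  have h03 : v 0 < v 3 := hvlt 0 3 (by decide)
  have h12 : v 1 < v 2 := hvlt 1 2 (by decide)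
  have h13 : v 1 < v 3 := hvlt 1 3 (by decide)
  have h23 : v 2 < v 3 := hvlt 2 3 (by decide)
  have hmem : ∀ i, v i ∈ S := fun i => (g i).2
  have hSeq : S = {v 0, v 1, v 2, v 3} := by
    symm
    apply Finset.eq_of_subset_of_card_le
    · intro x hx
      simp only [Finset.mem_insert, Finset.mem_singleton] at hx
      rcases hx with rfl|rfl|rfl|rfl <;> exact hmem _
    · rw [hS4]
      rw [Finset.card_insert_of_notMem (by simp only [Finset.mem_insert, Finset.mem_singleton]; omega),
        Finset.card_insert_of_notMem (by simp only [Finset.mem_insert, Finset.mem_singleton]; omega),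
        Finset.card_insert_of_notMem (by simp only [Finset.mem_singleton]; omega),
        Finset.card_singleton]
  -- determinant computation
  have hdet : Matrix.det (B.submatrix (fun i : S => (i : Fin n)) (fun j : S => (j : Fin n)))
      = (B (v 0) (v 1) * B (v 2) (v 3) - B (v 0) (v 2) * B (v 1) (v 3)
          + B (v 0) (v 3) * B (v 1) (v 2))^2 := by
    rw [← Matrix.det_submatrix_equiv_self g.toEquiv]
    have hmat : (B.submatrix (fun i : S => (i : Fin n)) (fun j : S => (j : Fin n))).submatrix
          g.toEquiv g.toEquiv
        = Matrix.of ![![0, B (v 0) (v 1), B (v 0) (v 2), B (v 0) (v 3)],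
                      ![-(B (v 0) (v 1)), 0, B (v 1) (v 2), B (v 1) (v 3)],
                      ![-(B (v 0) (v 2)), -(B (v 1) (v 2)), 0, B (v 2) (v 3)],
                      ![-(B (v 0) (v 3)), -(B (v 1) (v 3)), -(B (v 2) (v 3)), 0]] := by
      ext i j
      fin_cases i <;> fin_cases j <;>
        simp only [Matrix.submatrix_apply, Matrix.of_apply, Matrix.cons_val', Matrix.cons_val_zero,
          Matrix.cons_val_one, Matrix.head_cons, Matrix.cons_val_fin_one, Matrix.empty_val',
          Matrix.cons_val_succ, Matrix.head_fin_const, hvdef] <;>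
        first | exact hzero _ | exact hskew _ _ | rfl
    rw [hmat, det4]
  -- no-4-cycle consequences
  have hm12 : B (v 0) (v 1) * B (v 2) (v 3) = 0 ∨ B (v 0) (v 2) * B (v 1) (v 3) = 0 := by
    by_contra hcon
    push_neg at hcon
    obtain ⟨h1, h2⟩ := hcon
    rw [mul_ne_zero_iff] at h1 h2
    exact hno4cycle ⟨v 0, v 1, v 3, v 2, h01.ne, h03.ne, h02.ne, h13.ne, h12.ne, h23.ne',
      h1.1, h2.2, by rw [hskew]; exact neg_ne_zero.2 h1.2, by rw [hskew]; exact neg_ne_zero.2 h2.1⟩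
  have hm13 : B (v 0) (v 1) * B (v 2) (v 3) = 0 ∨ B (v 0) (v 3) * B (v 1) (v 2) = 0 := by
    by_contra hcon
    push_neg at hcon
    obtain ⟨h1, h2⟩ := hcon
    rw [mul_ne_zero_iff] at h1 h2
    exact hno4cycle ⟨v 0, v 1, v 2, v 3, h01.ne, h02.ne, h03.ne, h12.ne, h13.ne, h23.ne,
      h1.1, h2.2, h1.2, by rw [hskew]; exact neg_ne_zero.2 h2.1⟩
  have hm23 : B (v 0) (v 2) * B (v 1) (v 3) = 0 ∨ B (v 0) (v 3) * B (v 1) (v 2) = 0 := by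
    by_contra hcon
    push_neg at hcon
    obtain ⟨h1, h2⟩ := hcon
    rw [mul_ne_zero_iff] at h1 h2
    exact hno4cycle ⟨v 0, v 2, v 1, v 3, h02.ne, h01.ne, h03.ne, h12.ne', h23.ne, h13.ne,
      h1.1, by rw [hskew]; exact neg_ne_zero.2 h2.2, h1.2, by rw [hskew]; exact neg_ne_zero.2 h2.1⟩
  clear_value v g
  rw [hdet,
    sumsq _ _ _ (mulval _ _ (hval _ _) (hval _ _)) (mulval _ _ (hval _ _) (hval _ _))
      (mulval _ _ (hval _ _) (hval _ _)) hm12 hm13 hm23,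
    sqind _ _ (hval _ _) (hval _ _), sqind _ _ (hval _ _) (hval _ _),
    sqind _ _ (hval _ _) (hval _ _)]
  -- fiber computation
  have hfib : F.filter (fun q => ({q.1.1, q.1.2, q.2.1, q.2.2} : Finset (Fin n)) = S)
      = ({((v 0, v 1), (v 2, v 3)), ((v 0, v 2), (v 1, v 3)), ((v 0, v 3), (v 1, v 2))} :
            Finset ((Fin n × Fin n) × (Fin n × Fin n))).filter
          (fun q => B q.1.1 q.1.2 ≠ 0 ∧ B q.2.1 q.2.2 ≠ 0) := by
    ext q
    obtain ⟨⟨q11, q12⟩, q21, q22⟩ := q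
    simp only [hF, Finset.mem_filter, Finset.mem_univ, true_and, Finset.mem_insert,
      Finset.mem_singleton, Prod.mk.injEq]
    constructor
    · rintro ⟨⟨h1, h2, h3, hB1, hB2, d1, d2, d3, d4⟩, hfq⟩
      have e1 : q11 ∈ S := by rw [← hfq]; simp
      have e2 : q12 ∈ S := by rw [← hfq]; simp
      have e3 : q21 ∈ S := by rw [← hfq]; simp
      have e4 : q22 ∈ S := by rw [← hfq]; simp
      rw [hSeq] at e1 e2 e3 e4
      simp only [Finset.mem_insert, Finset.mem_singleton] at e1 e2 e3 e4
      have hcase : ((q11 = v 0 ∧ q12 = v 1) ∧ (q21 = v 2 ∧ q22 = v 3)) ∨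
          ((q11 = v 0 ∧ q12 = v 2) ∧ (q21 = v 1 ∧ q22 = v 3)) ∨
          ((q11 = v 0 ∧ q12 = v 3) ∧ (q21 = v 1 ∧ q22 = v 2)) :=
        pigeon _ _ _ _ _ _ _ _ h01 h02 h03 h12 h13 h23 h1 h2 h3 d1 d2 d3 d4 e1 e2 e3 e4
      exact ⟨hcase, hB1, hB2⟩
    · rintro ⟨(⟨⟨rfl, rfl⟩, rfl, rfl⟩ | ⟨⟨rfl, rfl⟩, rfl, rfl⟩ | ⟨⟨rfl, rfl⟩, rfl, rfl⟩), hB1, hB2⟩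
      · exact ⟨⟨h01, h23, h02, hB1, hB2, h02.ne, h03.ne, h12.ne, h13.ne⟩, hSeq.symm⟩
      · refine ⟨⟨h02, h13, h01, hB1, hB2, h01.ne, h03.ne, h12.ne', h23.ne⟩, ?_⟩
        rw [hSeq]
        ext x
        simp only [Finset.mem_insert, Finset.mem_singleton]
        tauto
      · refine ⟨⟨h03, h12, h01, hB1, hB2, h01.ne, h02.ne, h13.ne', h23.ne'⟩, ?_⟩
        rw [hSeq]
        ext x
        simp only [Finset.mem_insert, Finset.mem_singleton]
        tauto
  rw [hfib]
  have hne12 : ((v 0, v 1), (v 2, v 3)) ≠ ((v 0, v 2), (v 1, v 3)) := by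
    simp only [ne_eq, Prod.mk.injEq]; omega
  have hne13 : ((v 0, v 1), (v 2, v 3)) ≠ ((v 0, v 3), (v 1, v 2)) := by
    simp only [ne_eq, Prod.mk.injEq]; omega
  have hne23 : ((v 0, v 2), (v 1, v 3)) ≠ ((v 0, v 3), (v 1, v 2)) := by
    simp only [ne_eq, Prod.mk.injEq]; omega
  rw [Finset.filter_insert, Finset.filter_insert, Finset.filter_singleton]
  beta_reduce
  split_ifs <;>
    norm_num [Finset.card_insert_of_notMem, Finset.mem_insert, Finset.mem_singleton,
      hne12, hne13, hne23]
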